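/- Suppose sup_{ξ∈Ξ} |p̂(ξ) − p*(ξ)| ≤ δ, let l = max{0, p̂ − δ} and u = p̂ + δ, and D = {p : l ≤ p ≤ u, ∫_Ξ p = 1}. If Ξ has finite Lebesgue measure M(Ξ) and sup_{x∈X, ξ∈Ξ} |f(x,ξ)| = B < ∞, then for all x ∈ X: | ∫_Ξ f(x,ξ) p*(ξ) dξ − sup_{p∈D} ∫_Ξ f(x,ξ) p(ξ) dξ | ≤ 2δ·B·M(Ξ). -/
import Mathlib


open MeasureTheory

/-- If `sup_Ξ |p̂ − p*| ≤ δ` and `D` is the band ambiguity set built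
from `l = max{0, p̂ − δ}`, `u = p̂ + δ`, then for every `x`,
`|∫ f(x,·) p* − sup_{p∈D} ∫ f(x,·) p| ≤ 2δ·B·M(Ξ)`. -/
theorem kde_band_value_error
    {n m : ℕ} (X : Set (EuclideanSpace ℝ (Fin n)))
    (Ξ : Set (EuclideanSpace ℝ (Fin m))) (hΞ : MeasurableSet Ξ)
    (hΞfin : volume Ξ < ⊤)
    (f : EuclideanSpace ℝ (Fin n) → EuclideanSpace ℝ (Fin m) → ℝ)
    (pstar phat : EuclideanSpace ℝ (Fin m) → ℝ) (δ B : ℝ)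
    (hδ : 0 < δ) (hB : 0 ≤ B)
    (hfB : ∀ x ∈ X, ∀ ξ ∈ Ξ, |f x ξ| ≤ B)
    (hp0 : ∀ ξ, 0 ≤ pstar ξ) (hpstar_dens : ∫ ξ in Ξ, pstar ξ = 1)
    (herr : ∀ ξ ∈ Ξ, |phat ξ - pstar ξ| ≤ δ)
    (D : Set (EuclideanSpace ℝ (Fin m) → ℝ))
    (hD : D = {p | (∀ ξ ∈ Ξ, max 0 (phat ξ - δ) ≤ p ξ ∧ p ξ ≤ phat ξ + δ) ∧
      ∫ ξ in Ξ, p ξ = 1})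
    (hint : ∀ x ∈ X, ∀ p ∈ D, IntegrableOn (fun ξ => f x ξ * p ξ) Ξ)
    (hintstar : ∀ x ∈ X, IntegrableOn (fun ξ => f x ξ * pstar ξ) Ξ) :
    ∀ x ∈ X,
      |(∫ ξ in Ξ, f x ξ * pstar ξ) -
          sSup ((fun p => ∫ ξ in Ξ, f x ξ * p ξ) '' D)| ≤
        2 * δ * B * (volume Ξ).toReal := by
  intro x hx
  haveI : IsFiniteMeasure (volume.restrict Ξ) :=
    ⟨by rwa [Measure.restrict_apply_univ]⟩
  set C := 2 * δ * B * (volume Ξ).toReal with hC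
  have hC0 : 0 ≤ C := by
    have : (0:ℝ) ≤ (volume Ξ).toReal := ENNReal.toReal_nonneg
    positivity
  -- pstar ∈ D
  have hpstarD : pstar ∈ D := by
    rw [hD]
    refine ⟨fun ξ hξ => ?_, hpstar_dens⟩
    have := abs_le.mp (herr ξ hξ)
    constructor
    · exact max_le (hp0 ξ) (by linarith [this.1, this.2])
    · linarith [this.1, this.2]
  -- key bound for each p in D
  have key : ∀ p ∈ D, |(∫ ξ in Ξ, f x ξ * p ξ) - ∫ ξ in Ξ, f x ξ * pstar ξ| ≤ C := by
    intro p hpD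
    have hsub : (∫ ξ in Ξ, f x ξ * p ξ) - ∫ ξ in Ξ, f x ξ * pstar ξ
        = ∫ ξ in Ξ, (f x ξ * p ξ - f x ξ * pstar ξ) :=
      (integral_sub (hint x hx p hpD) (hintstar x hx)).symm
    rw [hsub]
    have hbound : ∀ᵐ ξ ∂(volume.restrict Ξ),
        ‖f x ξ * p ξ - f x ξ * pstar ξ‖ ≤ B * (2 * δ) := by
      filter_upwards [ae_restrict_mem hΞ] with ξ hξ
      have hp' := (hD ▸ hpD).1 ξ hξ
      have hps := abs_le.mp (herr ξ hξ)
      have hdiff : |p ξ - pstar ξ| ≤ 2 * δ := by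
        have h1 : phat ξ - δ ≤ p ξ := le_trans (le_max_right _ _) hp'.1
        have h2 : p ξ ≤ phat ξ + δ := hp'.2
        rw [abs_le]; constructor <;> nlinarith [hps.1, hps.2]
      have : ‖f x ξ * p ξ - f x ξ * pstar ξ‖ = |f x ξ| * |p ξ - pstar ξ| := by
        rw [← mul_sub, Real.norm_eq_abs, abs_mul]
      rw [this]
      exact mul_le_mul (hfB x hx ξ hξ) hdiff (abs_nonneg _) hB
    have := norm_integral_le_of_norm_le_const hbound
    calc |∫ ξ in Ξ, (f x ξ * p ξ - f x ξ * pstar ξ)|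
        ≤ B * (2 * δ) * ((volume.restrict Ξ) Set.univ).toReal := this
      _ = C := by rw [Measure.restrict_apply_univ, hC]; ring
  -- sup bounds
  have hne : ((fun p => ∫ ξ in Ξ, f x ξ * p ξ) '' D).Nonempty :=
    ⟨_, Set.mem_image_of_mem _ hpstarD⟩
  have hub : ∀ y ∈ (fun p => ∫ ξ in Ξ, f x ξ * p ξ) '' D,
      y ≤ (∫ ξ in Ξ, f x ξ * pstar ξ) + C := by
    rintro y ⟨p, hpD, rfl⟩
    have := (abs_le.mp (key p hpD)).2
    linarith
  have hsup_le : sSup ((fun p => ∫ ξ in Ξ, f x ξ * p ξ) '' D)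
      ≤ (∫ ξ in Ξ, f x ξ * pstar ξ) + C := csSup_le hne hub
  have hle_sup : (∫ ξ in Ξ, f x ξ * pstar ξ)
      ≤ sSup ((fun p => ∫ ξ in Ξ, f x ξ * p ξ) '' D) :=
    le_csSup ⟨(∫ ξ in Ξ, f x ξ * pstar ξ) + C, hub⟩ (Set.mem_image_of_mem _ hpstarD)
  rw [abs_le]
  constructor <;> linarith
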